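/- Let G be a topological group, n a natural number, and ρ : G →* (V ≃ₗ[ℂ] V) a linear action of G on V = (Fin n → ℂ). Let r be a natural number, and for each j ∈ Fin r let fⱼ ∈ MvPolynomial (Fin n) ℂ and χⱼ : G →* ℂˣ satisfy fⱼ(ρ(g)v) = χⱼ(g)·fⱼ(v) for all g, v, with χᵢ continuous (ℂˣ = Units ℂ with its standard topology). Fix i ∈ Fin r and a point v* ∈ V with fᵢ(v*) = 0 and fⱼ(v*) ≠ 0 for every j ≠ i. Suppose k : Fin r → ℕ with kᵢ > 0, and suppose h₁ ∈ MvPolynomial (Fin n) ℂ and Φ : G → ℂ satisfy h₁(v*) ≠ 0 and h₁(ρ(g)v) = (∏ⱼ χⱼ(g)^{kⱼ})·((∏ⱼ fⱼ(v)^{kⱼ})·Φ(g) + h₁(v)) for all g ∈ G, v ∈ V. Then χᵢ(g) = 1 for every g in the connected component of the identity of the stabilizer set {g ∈ G : ρ(g)v* = v*}, taken with the subspace topology from G. -/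

import Mathlib

open MvPolynomial

/-- If `fᵢ` appears nontrivially (with `kᵢ > 0`) in the denominator of an additive relative
invariant `h₁ / ∏ⱼ fⱼ^{kⱼ}` written in lowest terms (so `h₁(v*) ≠ 0` at the generic point
`v*` of `fᵢ = 0`), then the identity component of the isotropy group of `v*` lies in the
kernel of `χᵢ`. -/
theorem identity_component_of_stabilizer_in_kernel
    {G : Type*} [Group G] [TopologicalSpace G] [IsTopologicalGroup G]
    (n : ℕ) (ρ : G →* ((Fin n → ℂ) ≃ₗ[ℂ] (Fin n → ℂ)))
    (r : ℕ) (f : Fin r → MvPolynomial (Fin n) ℂ) (χ : Fin r → (G →* ℂˣ))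
    (hrel : ∀ j (g : G) (v : Fin n → ℂ),
      eval (ρ g v) (f j) = (χ j g : ℂ) * eval v (f j))
    (i : Fin r) (hcont : Continuous fun g => χ i g)
    (vstar : Fin n → ℂ)
    (hvi : eval vstar (f i) = 0)
    (hvj : ∀ j, j ≠ i → eval vstar (f j) ≠ 0)
    (k : Fin r → ℕ) (hk : 0 < k i)
    (h₁ : MvPolynomial (Fin n) ℂ) (Φ : G → ℂ)
    (hh₁ : eval vstar h₁ ≠ 0)
    (heq : ∀ (g : G) (v : Fin n → ℂ),
      eval (ρ g v) h₁ =
        (∏ j, ((χ j g : ℂ)) ^ (k j)) *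
          ((∏ j, (eval v (f j)) ^ (k j)) * Φ g + eval v h₁)) :
    ∀ s : {g : G // ρ g vstar = vstar},
      s ∈ connectedComponent (⟨1, by simp⟩ : {g : G // ρ g vstar = vstar}) →
      χ i s.1 = 1 := by
  -- On the stabilizer, `χ i` takes values in the `k i`-th roots of unity.
  have key : ∀ t : {g : G // ρ g vstar = vstar}, ((χ i t.1 : ℂ)) ^ (k i) = 1 := by
    intro t
    have hprod0 : (∏ j, (eval vstar (f j)) ^ (k j)) = 0 :=
      Finset.prod_eq_zero (Finset.mem_univ i)
        (by rw [hvi]; exact zero_pow hk.ne')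
    have h := heq t.1 vstar
    rw [t.2, hprod0, zero_mul, zero_add] at h
    have hP : (∏ j, ((χ j t.1 : ℂ)) ^ (k j)) = 1 :=
      mul_right_cancel₀ hh₁ (h.symm.trans (one_mul _).symm)
    have hχ : ∀ j, j ≠ i → (χ j t.1 : ℂ) = 1 := by
      intro j hj
      have h2 := hrel j t.1 vstar
      rw [t.2] at h2
      exact mul_right_cancel₀ (hvj j hj) (h2.symm.trans (one_mul _).symm)
    calc ((χ i t.1 : ℂ)) ^ (k i)
        = ∏ j, ((χ j t.1 : ℂ)) ^ (k j) := by
          rw [Finset.prod_eq_single i (fun j _ hj => by rw [hχ j hj, one_pow])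
            (fun h => (h (Finset.mem_univ i)).elim)]
      _ = 1 := hP
  intro s hs
  -- The set of `k i`-th roots of unity is finite, hence discrete.
  set T : Set ℂ := {z : ℂ | z ^ (k i) = 1} with hT
  have hTfin : T.Finite := by
    have hp : (Polynomial.X ^ (k i) - Polynomial.C 1 : Polynomial ℂ) ≠ 0 := by
      intro hcon
      have h3 : ((Polynomial.X ^ (k i) - Polynomial.C 1 : Polynomial ℂ)).natDegree = k i :=
        Polynomial.natDegree_X_pow_sub_C
      rw [hcon] at h3
      simp only [Polynomial.natDegree_zero] at h3
      exact hk.ne' h3.symm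
    have : T ⊆ {z : ℂ | (Polynomial.X ^ (k i) - Polynomial.C 1 : Polynomial ℂ).IsRoot z} := by
      intro z hz
      simp only [Polynomial.IsRoot, Polynomial.eval_sub, Polynomial.eval_pow,
        Polynomial.eval_X, Polynomial.eval_C, Set.mem_setOf_eq]
      rw [hz]; ring
    exact (Polynomial.finite_setOf_isRoot hp).subset this
  haveI : Finite T := hTfin.to_subtype
  haveI : DiscreteTopology T := Finite.instDiscreteTopology
  have hc : Continuous fun t : {g : G // ρ g vstar = vstar} => ((χ i t.1 : ℂ)) := by
    have := hcont.comp (continuous_subtype_val (p := fun g : G => ρ g vstar = vstar))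
    exact Units.continuous_val.comp this
  have hmaps : Set.MapsTo (fun t : {g : G // ρ g vstar = vstar} => ((χ i t.1 : ℂ)))
      (connectedComponent (⟨1, by simp⟩ : {g : G // ρ g vstar = vstar})) T :=
    fun t _ => key t
  have hconst := (isPreconnected_connectedComponent).constant_of_mapsTo
    (isDiscrete_iff_discreteTopology.mpr inferInstance) (hc.continuousOn) hmaps hs mem_connectedComponent
  have h1 : ((χ i (1 : G) : ℂ)) = 1 := by simp
  ext
  simpa [h1] using hconst
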